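/- arXiv:2308.13145 — 2 statements merged into one kernel-verified Lean document; each statement's English description precedes it below -/
import Mathlib

section
/- Let (S_n) be a zero-delayed renewal process with interarrival distribution F satisfying ∫₀^∞ x^q F(dx) < ∞ for some q > 0, forward recurrence time B_t, and renewal function Φ. Then E[B_t^q] ≤ (∫₀^∞ x^q F(dx)) · Φ(t) for all t ≥ 0; consequently there exist constants a, b > 0 such that E[B_t^q] ≤ a + b t for all t ≥ 0. -/
open MeasureTheory ProbabilityTheory
open scoped ENNReal NNReal

/-- `n`-fold convolution power of a measure on `ℝ`, with `F^{*0} = δ₀`. -/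
noncomputable def convPow (F : Measure ℝ) : ℕ → Measure ℝ
  | 0 => Measure.dirac 0
  | n + 1 => (convPow F n).conv F

/-- The renewal measure `Φ = Σ_{n≥0} F^{*n}`. -/
noncomputable def renewalMeasure (F : Measure ℝ) : Measure ℝ :=
  Measure.sum (fun n => convPow F n)

lemma aux_exp_convex {u : ℝ} (h0 : 0 ≤ u) (h1 : u ≤ 1) :
    Real.exp (-u) ≤ 1 - (1 - Real.exp (-1)) * u := by
  have h := convexOn_exp.2 (Set.mem_univ (0 : ℝ)) (Set.mem_univ (-1 : ℝ))
      (by linarith : (0:ℝ) ≤ 1 - u) h0 (by ring)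
  have e0 : (1 - u) • (0:ℝ) + u • (-1:ℝ) = -u := by
    simp only [smul_eq_mul]; ring
  rw [e0] at h
  simp only [smul_eq_mul, Real.exp_zero, mul_one] at h
  linarith

/-- independent sum has law equal to convolution of laws -/
lemma map_add_eq_conv {Ω : Type*} [MeasurableSpace Ω] (P : Measure Ω) [IsProbabilityMeasure P]
    {X Y : Ω → ℝ} (hX : Measurable X) (hY : Measurable Y) (hXY : IndepFun X Y P) :
    P.map (fun ω => X ω + Y ω) = (P.map X).conv (P.map Y) := by
  have h := (indepFun_iff_map_prod_eq_prod_map_map hX.aemeasurable hY.aemeasurable).mp hXY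
  have hcomp : (fun ω => X ω + Y ω)
      = (fun p : ℝ × ℝ => p.1 + p.2) ∘ (fun ω => (X ω, Y ω)) := rfl
  rw [hcomp, ← Measure.map_map (by fun_prop) (hX.prodMk hY), h]
  rfl

/-- For a zero-delayed renewal process with interarrival distribution `F` of finite mean and
finite `q`-th moment, and forward recurrence time `B_t`, one has
`E[B_t^q] ≤ (∫₀^∞ x^q F(dx)) Φ(t)` for all `t ≥ 0`; consequently there are constants
`a, b > 0` with `E[B_t^q] ≤ a + b t` for all `t ≥ 0`. -/
theorem stmt10 {Ω : Type*} [MeasurableSpace Ω] (P : Measure Ω) [IsProbabilityMeasure P]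
    (τ : ℕ → Ω → ℝ) (hτmeas : ∀ i, Measurable (τ i)) (hτpos : ∀ i ω, 0 < τ i ω)
    (F : Measure ℝ) [IsProbabilityMeasure F]
    (hlaw : ∀ i, P.map (τ i) = F)
    (hindep : iIndepFun τ P)
    (hmeanfin : Integrable (fun x => x) F)
    (q : ℝ) (hq : 0 < q) (hmom : Integrable (fun x => x ^ q) F)
    (S : ℕ → Ω → ℝ) (hS : ∀ n ω, S n ω = ∑ i ∈ Finset.range n, τ i ω)
    (N : ℝ → Ω → ℕ) (hN : ∀ t ω, N t ω = sInf {n | t < S n ω})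
    (B : ℝ → Ω → ℝ) (hB : ∀ t ω, B t ω = S (N t ω) ω - t) :
    (∀ t : ℝ, 0 ≤ t →
        ∫ ω, B t ω ^ q ∂P ≤ (∫ x, x ^ q ∂F) * (renewalMeasure F (Set.Icc 0 t)).toReal) ∧
      ∃ a b : ℝ, 0 < a ∧ 0 < b ∧ ∀ t : ℝ, 0 ≤ t → ∫ ω, B t ω ^ q ∂P ≤ a + b * t := by
  classical
  -- basic facts about S
  have hSeq : ∀ n, S n = ∑ i ∈ Finset.range n, τ i := by
    intro n; funext ω; rw [hS]; simp [Finset.sum_apply]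
  have hSmeas : ∀ n, Measurable (S n) := by
    intro n
    have h := Finset.measurable_sum (Finset.range n) (fun i _ => hτmeas i)
    have heq : S n = fun ω => ∑ i ∈ Finset.range n, τ i ω := by funext ω; exact hS n ω
    rwa [heq]
  have hSnn : ∀ n ω, 0 ≤ S n ω := by
    intro n ω; rw [hS]
    exact Finset.sum_nonneg fun i _ => (hτpos i ω).le
  have hSsucc : ∀ n ω, S (n + 1) ω = S n ω + τ n ω := by
    intro n ω; rw [hS, hS, Finset.sum_range_succ]
  have hindepS : ∀ n, IndepFun (S n) (τ n) P := by
    intro n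
    rw [hSeq]
    exact hindep.indepFun_sum_range_succ hτmeas n
  -- law of S n
  have hlawS : ∀ n, P.map (S n) = convPow F n := by
    intro n; induction n with
    | zero =>
      have h0 : S 0 = fun _ => (0:ℝ) := by funext ω; rw [hS]; simp
      rw [h0, show convPow F 0 = Measure.dirac 0 from rfl]
      simp [Measure.map_const]
    | succ n ih =>
      have hstep : S (n + 1) = fun ω => S n ω + τ n ω := by
        funext ω; exact hSsucc n ω
      rw [hstep, show convPow F (n+1) = (convPow F n).conv F from rfl, ← ih, ← hlaw n]
      exact map_add_eq_conv P (hSmeas n) (hτmeas n) (hindepS n)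
  -- F lives on (0, ∞)
  have hFpos : ∀ᵐ x ∂F, 0 < x := by
    rw [← hlaw 0]
    rw [ae_map_iff (hτmeas 0).aemeasurable measurableSet_Ioi]
    exact Filter.Eventually.of_forall fun ω => hτpos 0 ω
  -- Laplace transform pieces
  set φ : ℝ → ℝ → ℝ≥0∞ := fun s x => ENNReal.ofReal (Real.exp (-(s * x))) with hφdef
  have hφmeas : ∀ s, Measurable (φ s) := by
    intro s
    exact ((measurable_id.const_mul s).neg.exp).ennreal_ofReal
  have hφS : ∀ (s : ℝ) (n : ℕ), Measurable fun ω => φ s (S n ω) :=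
    fun s n => (hφmeas s).comp (hSmeas n)
  have hφτ : ∀ (s : ℝ) (n : ℕ), Measurable fun ω => φ s (τ n ω) :=
    fun s n => (hφmeas s).comp (hτmeas n)
  set ρ : ℝ → ℝ≥0∞ := fun s => ∫⁻ x, φ s x ∂F with hρdef
  have hρle : ∀ s, 0 ≤ s → ρ s ≤ 1 := by
    intro s hs
    have h1 : ρ s ≤ ∫⁻ _x, 1 ∂F := by
      refine lintegral_mono_ae ?_
      filter_upwards [hFpos] with x hx
      refine ENNReal.ofReal_le_one.mpr ?_
      calc Real.exp (-(s * x)) ≤ Real.exp 0 := Real.exp_le_exp.mpr (by nlinarith)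
        _ = 1 := Real.exp_zero
    simpa using h1
  have hlap : ∀ (s : ℝ) (n : ℕ), ∫⁻ ω, φ s (S n ω) ∂P = ρ s ^ n := by
    intro s n
    induction n with
    | zero =>
      have h0 : ∀ ω, φ s (S 0 ω) = 1 := by
        intro ω
        have : S 0 ω = 0 := by rw [hS]; simp
        simp [hφdef, this]
      simp [lintegral_congr h0]
    | succ n ih =>
      have hsplit : ∀ ω, φ s (S (n+1) ω) = φ s (S n ω) * φ s (τ n ω) := by
        intro ω
        simp only [hφdef]
        rw [← ENNReal.ofReal_mul (Real.exp_nonneg _), ← Real.exp_add]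
        congr 2
        rw [hSsucc n ω]; ring
      rw [lintegral_congr hsplit]
      have hind : IndepFun (fun ω => φ s (S n ω)) (fun ω => φ s (τ n ω)) P :=
        (hindepS n).comp (hφmeas s) (hφmeas s)
      have hmul := lintegral_mul_eq_lintegral_mul_lintegral_of_indepFun''
        (hφS s n).aemeasurable (hφτ s n).aemeasurable hind
      rw [hmul, ih]
      have hτint : ρ s = ∫⁻ ω, φ s (τ n ω) ∂P := by
        have h := lintegral_map (μ := P) (hφmeas s) (hτmeas n)
        rw [hlaw n] at h
        exact h
      rw [← hτint, pow_succ]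
  -- Chernoff bound
  have hchern : ∀ (s u : ℝ), 0 ≤ s → ∀ n,
      P {ω | S n ω ≤ u} ≤ ENNReal.ofReal (Real.exp (s * u)) * ρ s ^ n := by
    intro s u hs n
    have hset : MeasurableSet {ω | S n ω ≤ u} := measurableSet_le (hSmeas n) measurable_const
    have h1 : P {ω | S n ω ≤ u}
        = ∫⁻ ω, Set.indicator {ω' | S n ω' ≤ u} (fun _ => (1:ℝ≥0∞)) ω ∂P := by
      rw [lintegral_indicator_const hset, one_mul]
    rw [h1]
    have h2 : ∫⁻ ω, Set.indicator {ω' | S n ω' ≤ u} (fun _ => (1:ℝ≥0∞)) ω ∂P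
        ≤ ∫⁻ ω, ENNReal.ofReal (Real.exp (s * u)) * φ s (S n ω) ∂P := by
      refine lintegral_mono fun ω => ?_
      by_cases hω : S n ω ≤ u
      · rw [Set.indicator_of_mem (show ω ∈ {ω' | S n ω' ≤ u} from hω)]
        rw [hφdef, ← ENNReal.ofReal_mul (Real.exp_nonneg _), ← Real.exp_add]
        refine ENNReal.one_le_ofReal.mpr ?_
        have : (0:ℝ) ≤ s * u + -(s * S n ω) := by nlinarith
        calc (1:ℝ) = Real.exp 0 := Real.exp_zero.symm
          _ ≤ _ := Real.exp_le_exp.mpr this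
      · rw [Set.indicator_of_notMem (show ω ∉ {ω' | S n ω' ≤ u} from hω)]
        exact zero_le
    refine h2.trans ?_
    rw [lintegral_const_mul _ (hφS s n), hlap s n]
  -- ρ 1 < 1
  have hρ1 : ρ 1 < 1 := by
    have h1 : ρ 1 < ∫⁻ _x, 1 ∂F := by
      refine lintegral_strict_mono (IsProbabilityMeasure.ne_zero F)
        aemeasurable_const ?_ ?_
      · exact ne_top_of_le_ne_top ENNReal.one_ne_top (hρle 1 zero_le_one)
      · filter_upwards [hFpos] with x hx
        refine ENNReal.ofReal_lt_one.mpr ?_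
        rw [Real.exp_lt_one_iff]; nlinarith
    simpa using h1
  -- renewal measure as sum of probabilities
  have hPhi_eq : ∀ t : ℝ, 0 ≤ t →
      renewalMeasure F (Set.Icc 0 t) = ∑' n, P {ω | S n ω ≤ t} := by
    intro t ht
    rw [renewalMeasure, Measure.sum_apply _ measurableSet_Icc]
    congr 1; funext n
    rw [← hlawS n, Measure.map_apply (hSmeas n) measurableSet_Icc]
    have hset : (S n) ⁻¹' (Set.Icc 0 t) = {ω | S n ω ≤ t} := by
      ext ω
      constructor
      · intro h; exact h.2
      · intro h; exact ⟨hSnn n ω, h⟩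
    rw [hset]
  -- κ
  set c : ℝ := 1 - Real.exp (-1) with hcdef
  have hc : 0 < c := by
    have h1 : Real.exp (-1) < 1 := by rw [Real.exp_lt_one_iff]; norm_num
    rw [hcdef]; linarith
  have hminmeas : Measurable fun x : ℝ => ENNReal.ofReal (min x 1) :=
    (measurable_id.min measurable_const).ennreal_ofReal
  set κ : ℝ≥0∞ := ∫⁻ x, ENNReal.ofReal (min x 1) ∂F with hκdef
  have hκle : κ ≤ 1 := by
    have h1 : κ ≤ ∫⁻ _x, 1 ∂F := by
      refine lintegral_mono fun x => ?_
      exact ENNReal.ofReal_le_one.mpr (min_le_right _ _)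
    simpa using h1
  have hκtop : κ ≠ ∞ := ne_top_of_le_ne_top ENNReal.one_ne_top hκle
  have hκpos : 0 < κ := by
    rw [pos_iff_ne_zero]
    intro h0
    rw [hκdef, lintegral_eq_zero_iff hminmeas] at h0
    have hFalse : ∀ᵐ x ∂F, False := by
      filter_upwards [hFpos, h0] with x hx h0x
      have hle0 : min x 1 ≤ 0 := ENNReal.ofReal_eq_zero.mp h0x
      have hmin : 0 < min x 1 := lt_min hx one_pos
      linarith
    have hne : F ≠ 0 := IsProbabilityMeasure.ne_zero F
    haveI : (ae F).NeBot := ae_neBot.mpr hne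
    exact (hFalse.exists).elim fun x hx => hx
  set κR : ℝ := κ.toReal with hκRdef
  have hκR : 0 < κR := ENNReal.toReal_pos hκpos.ne' hκtop
  -- lower bound on 1 - ρ s
  have hsub : ∀ s : ℝ, 0 < s → s ≤ 1 →
      ENNReal.ofReal (c * s) * κ ≤ 1 - ρ s := by
    intro s hs0 hs1
    have hkey : ∀ x : ℝ, 0 < x → Real.exp (-(s * x)) + c * s * min x 1 ≤ 1 := by
      intro x hx
      have hu0 : 0 ≤ min (s * x) 1 := le_min (by positivity) zero_le_one
      have hu1 : min (s * x) 1 ≤ 1 := min_le_right _ _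
      have h1 : Real.exp (-(s * x)) ≤ Real.exp (-(min (s * x) 1)) :=
        Real.exp_le_exp.mpr (neg_le_neg (min_le_left _ _))
      have h2 := aux_exp_convex hu0 hu1
      have h3 : s * min x 1 ≤ min (s * x) 1 := by
        refine le_min ?_ ?_
        · exact mul_le_mul_of_nonneg_left (min_le_left _ _) hs0.le
        · have hm1 : min x 1 ≤ 1 := min_le_right _ _
          have hm0 : 0 ≤ min x 1 := le_min hx.le zero_le_one
          nlinarith
      nlinarith
    have hrw : ENNReal.ofReal (c * s) * κ = ∫⁻ x, ENNReal.ofReal (c * s * min x 1) ∂F := by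
      rw [hκdef, ← lintegral_const_mul _ hminmeas]
      congr 1; funext x
      rw [← ENNReal.ofReal_mul (by positivity)]
    have hsum : ρ s + ENNReal.ofReal (c * s) * κ ≤ 1 := by
      rw [hrw, hρdef, ← lintegral_add_left (hφmeas s)]
      have hle1 : ∫⁻ x, (φ s x + ENNReal.ofReal (c * s * min x 1)) ∂F ≤ ∫⁻ _x, 1 ∂F := by
        refine lintegral_mono_ae ?_
        filter_upwards [hFpos] with x hx
        rw [hφdef]
        rw [← ENNReal.ofReal_add (Real.exp_nonneg _) (by positivity)]
        refine ENNReal.ofReal_le_one.mpr ?_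
        have := hkey x hx
        nlinarith
      simpa using hle1
    exact ENNReal.le_sub_of_add_le_left
      (ne_top_of_le_ne_top ENNReal.one_ne_top (hρle s hs0.le)) hsum
  -- linear bound on renewal measure
  have hPhiBound : ∀ t : ℝ, 0 ≤ t →
      renewalMeasure F (Set.Icc 0 t)
        ≤ ENNReal.ofReal (Real.exp 1 * (c * (t + 1)⁻¹ * κR)⁻¹) := by
    intro t ht
    set s : ℝ := (t + 1)⁻¹ with hsdef
    have hs0 : 0 < s := by positivity
    have hs1 : s ≤ 1 := by
      rw [hsdef]
      rw [inv_le_one_iff₀]; right; linarith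
    have hst : s * t ≤ 1 := by
      rw [hsdef]
      rw [inv_mul_le_iff₀ (by linarith)]; linarith
    calc renewalMeasure F (Set.Icc 0 t) = ∑' n, P {ω | S n ω ≤ t} := hPhi_eq t ht
      _ ≤ ∑' n, ENNReal.ofReal (Real.exp (s * t)) * ρ s ^ n :=
          ENNReal.tsum_le_tsum fun n => hchern s t hs0.le n
      _ = ENNReal.ofReal (Real.exp (s * t)) * (1 - ρ s)⁻¹ := by
          rw [ENNReal.tsum_mul_left, ENNReal.tsum_geometric]
      _ ≤ ENNReal.ofReal (Real.exp 1) * (ENNReal.ofReal (c * s) * κ)⁻¹ := by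
          refine mul_le_mul' (ENNReal.ofReal_le_ofReal (Real.exp_le_exp.mpr hst)) ?_
          exact ENNReal.inv_le_inv' (hsub s hs0 hs1)
      _ = ENNReal.ofReal (Real.exp 1 * (c * s * κR)⁻¹) := by
          rw [← ENNReal.ofReal_toReal hκtop, ← hκRdef,
            ← ENNReal.ofReal_mul (by positivity),
            ← ENNReal.ofReal_inv_of_pos (by positivity),
            ← ENNReal.ofReal_mul (Real.exp_nonneg _)]
  have hPhiTop : ∀ t : ℝ, 0 ≤ t → renewalMeasure F (Set.Icc 0 t) ≠ ∞ := by
    intro t ht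
    exact ne_top_of_le_ne_top ENNReal.ofReal_ne_top (hPhiBound t ht)
  set D : ℝ := Real.exp 1 / (c * κR) with hDdef
  have hD : 0 < D := by positivity
  have hPhiReal : ∀ t : ℝ, 0 ≤ t →
      (renewalMeasure F (Set.Icc 0 t)).toReal ≤ D * (t + 1) := by
    intro t ht
    have h1 := hPhiBound t ht
    have h2 : Real.exp 1 * (c * (t + 1)⁻¹ * κR)⁻¹ = D * (t + 1) := by
      rw [hDdef]
      have hc' : c ≠ 0 := ne_of_gt hc
      have hκ' : κR ≠ 0 := ne_of_gt hκR
      have ht' : t + 1 ≠ 0 := by linarith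
      field_simp
    refine (ENNReal.toReal_le_of_le_ofReal ?_ h1).trans_eq h2
    positivity
  -- the q-th moment of F (as ENNReal)
  have hψmeas : Measurable fun x : ℝ => ENNReal.ofReal (x ^ q) :=
    (measurable_id.pow measurable_const).ennreal_ofReal
  set Eq' : ℝ≥0∞ := ∫⁻ x, ENNReal.ofReal (x ^ q) ∂F with hEq'def
  have hEq'top : Eq' ≠ ∞ := by
    have h1 : Eq' ≤ ∫⁻ x, (‖x ^ q‖₊ : ℝ≥0∞) ∂F := by
      refine lintegral_mono fun x => ?_
      exact Real.ofReal_le_enorm _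
    exact ne_top_of_le_ne_top hmom.2.ne h1
  have hFq_nn : ∀ᵐ x ∂F, 0 ≤ x ^ q := by
    filter_upwards [hFpos] with x hx
    exact Real.rpow_nonneg hx.le _
  have hEqReal : Eq'.toReal = ∫ x, x ^ q ∂F := by
    rw [integral_eq_lintegral_of_nonneg_ae hFq_nn hmom.1]
  have hEqR_nn : 0 ≤ ∫ x, x ^ q ∂F := integral_nonneg_of_ae hFq_nn
  -- measurability of B t
  have hNmeas : ∀ t : ℝ, Measurable (N t) := by
    intro t
    apply measurable_to_countable'
    intro n
    have hchar : N t ⁻¹' {n} =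
        (({ω | t < S n ω} ∩ ⋂ k, ⋂ _ : k < n, {ω | S k ω ≤ t}) ∪
          ({_ω : Ω | n = 0} ∩ ⋂ k, {ω | S k ω ≤ t})) := by
      ext ω
      simp only [Set.mem_preimage, Set.mem_singleton_iff, Set.mem_union, Set.mem_inter_iff,
        Set.mem_iInter, Set.mem_setOf_eq]
      rw [hN]
      constructor
      · intro hEq
        by_cases hne : {k | t < S k ω}.Nonempty
        · left
          constructor
          · have := Nat.sInf_mem hne
            rw [hEq] at this
            exact this
          · intro k hk
            have : k ∉ {k | t < S k ω} := Nat.notMem_of_lt_sInf (by rw [hEq]; exact hk)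
            exact le_of_not_gt this
        · rw [Set.not_nonempty_iff_eq_empty] at hne
          right
          constructor
          · rw [hne, Nat.sInf_empty] at hEq; exact hEq.symm
          · intro k
            by_contra hk
            have hkmem : k ∈ {k | t < S k ω} := lt_of_not_ge hk
            rw [hne] at hkmem
            exact hkmem
        -- done forward
      · rintro (⟨h1, h2⟩ | ⟨h1, h2⟩)
        · refine le_antisymm (Nat.sInf_le h1) ?_
          by_contra hlt
          push_neg at hlt
          have hmem := Nat.sInf_mem (⟨n, h1⟩ : {k | t < S k ω}.Nonempty)
          have := h2 _ hlt
          exact absurd hmem (by simp only [Set.mem_setOf_eq]; exact not_lt.mpr this)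
        · have : {k | t < S k ω} = ∅ := by
            rw [Set.eq_empty_iff_forall_notMem]
            intro k
            simp only [Set.mem_setOf_eq]
            exact not_lt.mpr (h2 k)
          rw [this, Nat.sInf_empty, h1]
    rw [hchar]
    refine MeasurableSet.union ?_ ?_
    · exact (measurableSet_lt measurable_const (hSmeas n)).inter
        (MeasurableSet.iInter fun k => MeasurableSet.iInter fun _ =>
          measurableSet_le (hSmeas k) measurable_const)
    · exact (MeasurableSet.const _).inter
        (MeasurableSet.iInter fun k => measurableSet_le (hSmeas k) measurable_const)
  have hBmeas : ∀ t : ℝ, Measurable (B t) := by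
    intro t
    have h1 : Measurable fun p : Ω × ℕ => S p.2 p.1 :=
      measurable_from_prod_countable_left fun n => hSmeas n
    have h2 : Measurable fun ω => S (N t ω) ω :=
      h1.comp (measurable_id.prodMk (hNmeas t))
    have h3 : B t = fun ω => S (N t ω) ω - t := by
      funext ω; exact hB t ω
    rw [h3]
    exact h2.sub measurable_const
  -- almost sure goodness
  have hGae : ∀ t : ℝ, ∀ᵐ ω ∂P, ∃ n, t < S n ω := by
    intro t
    rw [ae_iff]
    have hseteq : {ω | ¬∃ n, t < S n ω} = ⋂ n, {ω | S n ω ≤ t} := by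
      ext ω; simp only [Set.mem_setOf_eq, Set.mem_iInter, not_exists, not_lt]
    rw [hseteq]
    have hle : ∀ n : ℕ, P (⋂ m, {ω | S m ω ≤ t})
        ≤ ENNReal.ofReal (Real.exp (1 * t)) * ρ 1 ^ n := by
      intro n
      exact le_trans (measure_mono (Set.iInter_subset _ n)) (hchern 1 t zero_le_one n)
    have htend : Filter.Tendsto (fun n : ℕ => ENNReal.ofReal (Real.exp (1 * t)) * ρ 1 ^ n)
        Filter.atTop (nhds 0) := by
      have h0 := ENNReal.tendsto_pow_atTop_nhds_zero_of_lt_one hρ1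
      have := ENNReal.Tendsto.const_mul h0
        (Or.inr (ENNReal.ofReal_ne_top : ENNReal.ofReal (Real.exp (1 * t)) ≠ ∞))
      simpa using this
    have := ge_of_tendsto' htend hle
    exact le_antisymm this zero_le
  -- key moment bound
  have hkey : ∀ t : ℝ, 0 ≤ t →
      ∫ ω, B t ω ^ q ∂P ≤ (∫ x, x ^ q ∂F) * (renewalMeasure F (Set.Icc 0 t)).toReal := by
    intro t ht
    -- pointwise facts on the good set
    have hgood : ∀ ω, (∃ n, t < S n ω) → 0 < B t ω ∧ B t ω ≤ τ (N t ω - 1) ω ∧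
        S (N t ω - 1) ω ≤ t := by
      intro ω hω
      have hne : {k | t < S k ω}.Nonempty := hω
      have hmem : t < S (N t ω) ω := by
        have := Nat.sInf_mem hne; rw [← hN t ω] at this; exact this
      have hN0 : N t ω ≠ 0 := by
        intro h0
        rw [h0] at hmem
        have : S 0 ω = 0 := by rw [hS]; simp
        rw [this] at hmem; linarith
      have hmlt : N t ω - 1 < N t ω := Nat.sub_lt (Nat.pos_of_ne_zero hN0) one_pos
      have hmnot : S (N t ω - 1) ω ≤ t := by
        have : N t ω - 1 ∉ {k | t < S k ω} := by
          apply Nat.notMem_of_lt_sInf; rw [← hN t ω]; exact hmlt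
        exact le_of_not_gt this
      have hsucc : N t ω - 1 + 1 = N t ω := Nat.succ_pred_eq_of_ne_zero hN0
      have hsum : S (N t ω) ω = S (N t ω - 1) ω + τ (N t ω - 1) ω := by
        have h := hSsucc (N t ω - 1) ω
        rw [hsucc] at h
        exact h
      refine ⟨?_, ?_, hmnot⟩
      · rw [hB]; linarith
      · rw [hB]; rw [hsum]; linarith
    -- a.e. nonneg
    have hBnn : 0 ≤ᵐ[P] fun ω => B t ω ^ q := by
      filter_upwards [hGae t] with ω hω
      exact Real.rpow_nonneg (hgood ω hω).1.le _
    -- dominating function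
    set f : ℕ → Ω → ℝ≥0∞ := fun n =>
      Set.indicator {ω' | S n ω' ≤ t} (fun ω' => ENNReal.ofReal (τ n ω' ^ q)) with hfdef
    have hfmeas : ∀ n, Measurable (f n) := by
      intro n
      exact Measurable.indicator (((hτmeas n).pow measurable_const).ennreal_ofReal)
        (measurableSet_le (hSmeas n) measurable_const)
    have hdom : ∀ᵐ ω ∂P, ENNReal.ofReal (B t ω ^ q) ≤ ∑' n, f n ω := by
      filter_upwards [hGae t] with ω hω
      obtain ⟨hpos, hle, hSm⟩ := hgood ω hω
      have h1 : ENNReal.ofReal (B t ω ^ q) ≤ f (N t ω - 1) ω := by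
        simp only [hfdef]
        rw [Set.indicator_of_mem (by exact hSm : ω ∈ {ω' | S (N t ω - 1) ω' ≤ t})]
        exact ENNReal.ofReal_le_ofReal (Real.rpow_le_rpow hpos.le hle hq.le)
      exact h1.trans (ENNReal.le_tsum _)
    -- each term
    have hterm : ∀ n, ∫⁻ ω, f n ω ∂P = P {ω | S n ω ≤ t} * Eq' := by
      intro n
      have hrw : ∀ ω, f n ω =
          (Set.indicator (Set.Iic t) (fun _ => (1:ℝ≥0∞)) (S n ω)) *
            (ENNReal.ofReal (τ n ω ^ q)) := by
        intro ω
        simp only [hfdef]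
        by_cases hω : S n ω ≤ t
        · rw [Set.indicator_of_mem (by exact hω : ω ∈ {ω' | S n ω' ≤ t}),
            Set.indicator_of_mem (by exact hω : (S n ω) ∈ Set.Iic t), one_mul]
        · rw [Set.indicator_of_notMem (by exact hω : ω ∉ {ω' | S n ω' ≤ t}),
            Set.indicator_of_notMem (by exact hω : (S n ω) ∉ Set.Iic t), zero_mul]
      have hφ1 : Measurable (Set.indicator (Set.Iic t) (fun _ => (1:ℝ≥0∞))) :=
        measurable_const.indicator measurableSet_Iic
      have hψ1 : Measurable fun x : ℝ => ENNReal.ofReal (x ^ q) := hψmeas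
      have hind : IndepFun (fun ω => Set.indicator (Set.Iic t) (fun _ => (1:ℝ≥0∞)) (S n ω))
          (fun ω => ENNReal.ofReal (τ n ω ^ q)) P :=
        (hindepS n).comp hφ1 hψ1
      have hm1 : Measurable fun ω => Set.indicator (Set.Iic t) (fun _ => (1:ℝ≥0∞)) (S n ω) :=
        hφ1.comp (hSmeas n)
      have hm2 : Measurable fun ω => ENNReal.ofReal (τ n ω ^ q) := hψ1.comp (hτmeas n)
      have hmul := lintegral_mul_eq_lintegral_mul_lintegral_of_indepFun''
        hm1.aemeasurable hm2.aemeasurable hind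
      rw [lintegral_congr hrw, hmul]
      congr 1
      · have : ∀ ω, Set.indicator (Set.Iic t) (fun _ => (1:ℝ≥0∞)) (S n ω)
            = Set.indicator {ω' | S n ω' ≤ t} (fun _ => (1:ℝ≥0∞)) ω := by
          intro ω
          by_cases hω : S n ω ≤ t
          · rw [Set.indicator_of_mem (by exact hω), Set.indicator_of_mem (by exact hω)]
          · rw [Set.indicator_of_notMem (by exact hω), Set.indicator_of_notMem (by exact hω)]
        rw [lintegral_congr this,
          lintegral_indicator_const (measurableSet_le (hSmeas n) measurable_const), one_mul]
      · rw [hEq'def, ← hlaw n, lintegral_map hψ1 (hτmeas n)]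
    -- put together
    have hlint : ∫⁻ ω, ENNReal.ofReal (B t ω ^ q) ∂P
        ≤ renewalMeasure F (Set.Icc 0 t) * Eq' := by
      calc ∫⁻ ω, ENNReal.ofReal (B t ω ^ q) ∂P ≤ ∫⁻ ω, ∑' n, f n ω ∂P :=
            lintegral_mono_ae hdom
        _ = ∑' n, ∫⁻ ω, f n ω ∂P := lintegral_tsum fun n => (hfmeas n).aemeasurable
        _ = ∑' n, P {ω | S n ω ≤ t} * Eq' := by
            congr 1; funext n; exact hterm n
        _ = (∑' n, P {ω | S n ω ≤ t}) * Eq' := ENNReal.tsum_mul_right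
        _ = renewalMeasure F (Set.Icc 0 t) * Eq' := by rw [hPhi_eq t ht]
    calc ∫ ω, B t ω ^ q ∂P = (∫⁻ ω, ENNReal.ofReal (B t ω ^ q) ∂P).toReal :=
          integral_eq_lintegral_of_nonneg_ae hBnn
            (((hBmeas t).pow measurable_const).aestronglyMeasurable)
      _ ≤ (renewalMeasure F (Set.Icc 0 t) * Eq').toReal := by
          refine ENNReal.toReal_mono ?_ hlint
          exact ENNReal.mul_ne_top (hPhiTop t ht) hEq'top
      _ = (∫ x, x ^ q ∂F) * (renewalMeasure F (Set.Icc 0 t)).toReal := by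
          rw [ENNReal.toReal_mul, hEqReal]; ring
  refine ⟨hkey, ?_⟩
  -- linear bound
  refine ⟨(∫ x, x ^ q ∂F) * D + 1, (∫ x, x ^ q ∂F) * D + 1, by positivity, by positivity, ?_⟩
  intro t ht
  have h1 := hkey t ht
  have h2 := hPhiReal t ht
  have h3 : (∫ x, x ^ q ∂F) * (renewalMeasure F (Set.Icc 0 t)).toReal
      ≤ (∫ x, x ^ q ∂F) * (D * (t + 1)) := by
    exact mul_le_mul_of_nonneg_left h2 hEqR_nn
  have hDE : 0 ≤ (∫ x, x ^ q ∂F) * D := by positivity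
  nlinarith
end

section
/- If F is a spread out probability distribution on [0,∞) (i.e., some convolution power F^{*n} has a nonzero absolutely continuous component), then there exist a, b > 0, δ > 0 and n₀ ≥ 1 such that F^{*n₀} has a uniform component on (a, a+b): F^{*n₀}((u, v]) ≥ δ(v − u) for all a < u < v < a + b. -/
open MeasureTheory

open scoped ENNReal

theorem myconv_assoc (μ ν ρ : Measure ℝ) [SFinite μ] [SFinite ν] [SFinite ρ] :
    (μ.conv ν).conv ρ = μ.conv (ν.conv ρ) := by
  have madd : Measurable fun p : ℝ × ℝ => p.1 + p.2 := measurable_add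
  have e2 : μ.prod (ν.conv ρ)
      = Measure.map (Prod.map (id : ℝ → ℝ) fun p : ℝ × ℝ => p.1 + p.2)
        (μ.prod (ν.prod ρ)) := by
    rw [Measure.conv, ← Measure.map_prod_map _ _ measurable_id madd, Measure.map_id]
  have e3 : (μ.conv ν).prod ρ
      = Measure.map (Prod.map (fun p : ℝ × ℝ => p.1 + p.2) (id : ℝ → ℝ))
        ((μ.prod ν).prod ρ) := by
    rw [Measure.conv, ← Measure.map_prod_map _ _ madd measurable_id, Measure.map_id]
  have hL : (μ.conv ν).conv ρ
      = Measure.map (fun p : (ℝ × ℝ) × ℝ => p.1.1 + p.1.2 + p.2) ((μ.prod ν).prod ρ) := by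
    rw [Measure.conv, e3, Measure.map_map madd (madd.prodMap measurable_id)]
    rfl
  have hR : μ.conv (ν.conv ρ)
      = Measure.map (fun p : (ℝ × ℝ) × ℝ => p.1.1 + (p.1.2 + p.2)) ((μ.prod ν).prod ρ) := by
    rw [Measure.conv, e2, ← Measure.prodAssoc_prod,
      Measure.map_map (measurable_id.prodMap madd) (MeasurableEquiv.measurable _),
      Measure.map_map madd ((measurable_id.prodMap madd).comp (MeasurableEquiv.measurable _))]
    rfl
  rw [hL, hR]
  simp only [add_assoc]

theorem convPow_prob (F : Measure ℝ) [IsProbabilityMeasure F] :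
    ∀ n, IsProbabilityMeasure (convPow F n)
  | 0 => by unfold convPow; infer_instance
  | n + 1 => by
      haveI := convPow_prob F n
      unfold convPow; infer_instance

theorem convPow_add (F : Measure ℝ) [IsProbabilityMeasure F] (m : ℕ) :
    ∀ k, convPow F (m + k) = (convPow F m).conv (convPow F k)
  | 0 => by
      haveI := convPow_prob F m
      show convPow F m = (convPow F m).conv (Measure.dirac 0)
      rw [Measure.conv_dirac_zero]
  | k + 1 => by
      haveI := convPow_prob F m
      haveI := convPow_prob F k
      haveI := convPow_prob F (m + k)
      show (convPow F (m + k)).conv F = (convPow F m).conv ((convPow F k).conv F)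
      rw [convPow_add F m k, myconv_assoc]

theorem myconv_apply (μ ν : Measure ℝ) [SFinite μ] [SFinite ν] {s : Set ℝ}
    (hs : MeasurableSet s) :
    μ.conv ν s = ∫⁻ x, ν ((x + ·) ⁻¹' s) ∂μ := by
  rw [Measure.conv, Measure.map_apply measurable_add hs,
    Measure.prod_apply (measurable_add hs)]
  rfl

theorem myconv_mono {μ₁ μ₂ ν₁ ν₂ : Measure ℝ} [SFinite μ₁] [SFinite μ₂] [SFinite ν₁]
    [SFinite ν₂] (h1 : μ₁ ≤ μ₂) (h2 : ν₁ ≤ ν₂) : μ₁.conv ν₁ ≤ μ₂.conv ν₂ := by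
  refine Measure.le_iff.mpr fun s hs => ?_
  rw [myconv_apply _ _ hs, myconv_apply _ _ hs]
  exact lintegral_mono' h1 fun x => Measure.le_iff'.mp h2 _

theorem convPow_Iio (F : Measure ℝ) [IsProbabilityMeasure F] (hsupp : F (Set.Iio 0) = 0) :
    ∀ n, convPow F n (Set.Iio 0) = 0
  | 0 => by
      show Measure.dirac (0:ℝ) (Set.Iio 0) = 0
      rw [Measure.dirac_apply' _ measurableSet_Iio]
      simp
  | n + 1 => by
      haveI := convPow_prob F n
      have ih := convPow_Iio F hsupp n
      show (convPow F n).conv F (Set.Iio 0) = 0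
      rw [myconv_apply _ _ measurableSet_Iio]
      have hpre : ∀ x : ℝ, (x + ·) ⁻¹' Set.Iio 0 = Set.Iio (-x) := by
        intro x; ext y
        simp only [Set.mem_preimage, Set.mem_Iio]
        constructor <;> intro h <;> linarith
      simp_rw [hpre]
      have hm : Measurable fun x : ℝ => F (Set.Iio (-x)) := by
        have : Monotone fun t : ℝ => F (Set.Iio t) :=
          fun a b hab => measure_mono (Set.Iio_subset_Iio hab)
        exact this.measurable.comp measurable_neg
      rw [lintegral_eq_zero_iff hm]
      have hae : ∀ᵐ x ∂(convPow F n), x ∉ Set.Iio 0 := by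
        rw [ae_iff]; simp only [not_not]; exact ih
      filter_upwards [hae] with x hx
      have hx0 : (0:ℝ) ≤ x := not_lt.mp hx
      have : Set.Iio (-x) ⊆ Set.Iio 0 := Set.Iio_subset_Iio (by linarith)
      exact le_antisymm (le_trans (measure_mono this) (le_of_eq hsupp)) zero_le

theorem restrict_conv_apply (A : Set ℝ) (hA : MeasurableSet A) {s : Set ℝ}
    (hs : MeasurableSet s) :
    ((volume.restrict A).conv (volume.restrict A)) s
      = ∫⁻ t in s, volume (A ∩ {x | t - x ∈ A}) ∂volume := by
  have key : ∀ (B : Set ℝ), MeasurableSet B → ∀ (f : ℝ → ℝ), Measurable f →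
      ∫⁻ y in B, A.indicator (fun _ => (1:ℝ≥0∞)) (f y) ∂volume
        = volume (B ∩ {y | f y ∈ A}) := by
    intro B hB f hf
    have hD : MeasurableSet {y : ℝ | f y ∈ A} := hf hA
    rw [Set.inter_comm, ← Measure.restrict_apply hD, ← lintegral_indicator_one hD]
    exact lintegral_congr fun y => by
      by_cases h : f y ∈ A <;> simp [Set.indicator_apply, h, Set.mem_setOf_eq]
  rw [myconv_apply _ _ hs]
  have h1 : ∀ x : ℝ, (volume.restrict A) ((x + ·) ⁻¹' s)
      = ∫⁻ t in s, A.indicator (fun _ => (1:ℝ≥0∞)) (t - x) ∂volume := by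
    intro x
    rw [Measure.restrict_apply ((measurable_const_add x) hs)]
    have hset : (x + ·) ⁻¹' s ∩ A = (x + ·) ⁻¹' (s ∩ {t | t - x ∈ A}) := by
      ext y
      simp only [Set.mem_inter_iff, Set.mem_preimage, Set.mem_setOf_eq, add_sub_cancel_left]
    rw [hset, measure_preimage_add volume x _, key s hs _ (measurable_sub_const x)]
  calc ∫⁻ x, (volume.restrict A) ((x + ·) ⁻¹' s) ∂(volume.restrict A)
      = ∫⁻ x in A, ∫⁻ t in s, A.indicator (fun _ => (1:ℝ≥0∞)) (t - x) ∂volume ∂volume := by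
        exact lintegral_congr h1
    _ = ∫⁻ t in s, ∫⁻ x in A, A.indicator (fun _ => (1:ℝ≥0∞)) (t - x) ∂volume ∂volume := by
        refine lintegral_lintegral_swap ?_
        exact ((measurable_const.indicator hA).comp
          (measurable_snd.sub measurable_fst)).aemeasurable
    _ = ∫⁻ t in s, volume (A ∩ {x | t - x ∈ A}) ∂volume := by
        refine lintegral_congr fun t => ?_
        rw [key A hA (fun x => t - x) (measurable_const.sub measurable_id), Set.inter_comm]

theorem smul_conv_smul (c : ℝ≥0∞) (μ : Measure ℝ) [SFinite μ] {s : Set ℝ}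
    (hs : MeasurableSet s) :
    ((c • μ).conv (c • μ)) s = c * (c * (μ.conv μ) s) := by
  have hmeas : Measurable fun x : ℝ => μ ((x + ·) ⁻¹' s) :=
    measurable_measure_prodMk_left (measurable_add hs)
  rw [myconv_apply _ _ hs, myconv_apply _ _ hs, lintegral_smul_measure]
  simp_rw [Measure.smul_apply, smul_eq_mul]
  rw [lintegral_const_mul c hmeas]

theorem exists_component (G : Measure ℝ) [IsFiniteMeasure G] (hG0 : G ≠ 0)
    (hac : G ≪ (volume : Measure ℝ)) (hIic : G (Set.Iic 0) = 0) :
    ∃ (ε : ℝ) (A : Set ℝ), 0 < ε ∧ MeasurableSet A ∧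
      (∀ x ∈ A, ε < x) ∧ 0 < volume A ∧
      (ENNReal.ofReal ε) • volume.restrict A ≤ G := by
  set g := G.rnDeriv volume with hgdef
  have hg : Measurable g := Measure.measurable_rnDeriv _ _
  have hGd : volume.withDensity g = G := Measure.withDensity_rnDeriv_eq G volume hac
  have hIoi : 0 < G (Set.Ioi 0) := by
    by_contra h
    push_neg at h
    have h0 : G (Set.Ioi 0) = 0 := le_antisymm h zero_le
    have : G Set.univ = 0 := by
      have := measure_union_le (μ := G) (Set.Iic 0) (Set.Ioi 0)
      rw [Set.Iic_union_Ioi, hIic, h0] at this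
      simpa using this
    exact hG0 (Measure.measure_univ_eq_zero.mp this)
  set S := {x : ℝ | 0 < x ∧ 0 < g x} with hSdef
  have hSm : MeasurableSet S := by
    have : S = Set.Ioi 0 ∩ g ⁻¹' (Set.Ioi 0) := by
      ext x; simp [hSdef, Set.mem_setOf_eq]
    rw [this]
    exact measurableSet_Ioi.inter (hg measurableSet_Ioi)
  have hS : 0 < volume S := by
    by_contra h
    push_neg at h
    have hS0 : volume S = 0 := le_antisymm h zero_le
    have hIoiz : G (Set.Ioi 0) = 0 := by
      rw [← hGd, withDensity_apply _ measurableSet_Ioi]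
      have hsub : Set.Ioi (0:ℝ) ⊆ S ∪ (Set.Ioi 0 \ S) := fun x hx => by
        by_cases hxS : x ∈ S
        · exact Or.inl hxS
        · exact Or.inr ⟨hx, hxS⟩
      refine le_antisymm ?_ zero_le
      calc ∫⁻ x in Set.Ioi 0, g x ∂volume
          ≤ ∫⁻ x in S ∪ (Set.Ioi 0 \ S), g x ∂volume := lintegral_mono_set hsub
        _ ≤ ∫⁻ x in S, g x ∂volume + ∫⁻ x in Set.Ioi 0 \ S, g x ∂volume :=
            lintegral_union_le _ _ _
        _ = 0 := by
            rw [setLIntegral_measure_zero _ _ hS0]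
            have : ∫⁻ x in Set.Ioi 0 \ S, g x ∂volume
                = ∫⁻ x in Set.Ioi 0 \ S, 0 ∂volume := by
              refine setLIntegral_congr_fun (measurableSet_Ioi.diff hSm) ?_
              refine fun x hx => ?_
              have : ¬ (0 < g x) := fun hgx => hx.2 ⟨hx.1, hgx⟩
              simpa using not_lt.mp this
            simp [this]
    exact absurd hIoiz hIoi.ne'
  -- covering by the sets A k
  set A : ℕ → Set ℝ := fun k =>
    {x : ℝ | 1/(k+1 : ℝ) < x ∧ ENNReal.ofReal (1/(k+1 : ℝ)) ≤ g x} with hAdef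
  have hAm : ∀ k, MeasurableSet (A k) := by
    intro k
    have : A k = Set.Ioi (1/(k+1:ℝ)) ∩ g ⁻¹' (Set.Ici (ENNReal.ofReal (1/(k+1:ℝ)))) := by
      ext x; simp [hAdef, Set.mem_setOf_eq]
    rw [this]
    exact measurableSet_Ioi.inter (hg measurableSet_Ici)
  have hcov : S ⊆ ⋃ k, A k := by
    intro x hx
    obtain ⟨hx1, hx2⟩ := hx
    obtain ⟨k₁, hk₁⟩ := exists_nat_gt (1/x)
    obtain ⟨m, hm⟩ := ENNReal.exists_inv_nat_lt hx2.ne'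
    refine Set.mem_iUnion.mpr ⟨max k₁ m, ?_, ?_⟩
    · have h1 : (1:ℝ)/(max k₁ m + 1) ≤ 1/(k₁ + 1) := by
        apply one_div_le_one_div_of_le
        · positivity
        · have : (k₁ : ℝ) ≤ max k₁ m := by exact_mod_cast Nat.le_max_left k₁ m
          linarith
      have h2 : (1:ℝ)/(k₁+1) < x := by
        rw [div_lt_iff₀ (by positivity)]
        have h3 : 1/x < (k₁:ℝ) + 1 := by linarith
        rw [div_lt_iff₀ hx1] at h3
        linarith [mul_comm x ((k₁:ℝ)+1)]
      linarith
    · have e1 : ENNReal.ofReal (1/(max k₁ m + 1 : ℝ)) = (((max k₁ m + 1 : ℕ) : ℝ≥0∞))⁻¹ := by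
        rw [one_div, ENNReal.ofReal_inv_of_pos (by positivity)]
        congr 1
        rw [← Nat.cast_add_one, ENNReal.ofReal_natCast]
      have h1 : ENNReal.ofReal (1/(max k₁ m + 1 : ℝ)) ≤ ((m:ℝ≥0∞))⁻¹ := by
        rw [e1]
        refine ENNReal.inv_le_inv.mpr ?_
        exact_mod_cast Nat.le_succ_of_le (Nat.le_max_right k₁ m)
      exact le_trans h1 hm.le
  have hex : ∃ k, volume (A k) ≠ 0 := by
    by_contra h
    push_neg at h
    have : volume (⋃ k, A k) = 0 := measure_iUnion_null h
    exact absurd (le_antisymm (le_trans (measure_mono hcov) this.le) zero_le) hS.ne'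
  obtain ⟨k, hk⟩ := hex
  refine ⟨1/(k+1 : ℝ), A k, by positivity, hAm k, fun x hx => hx.1, pos_iff_ne_zero.mpr hk, ?_⟩
  refine Measure.le_iff.mpr fun s hs => ?_
  have hres : ((ENNReal.ofReal (1/(k+1:ℝ))) • volume.restrict (A k)) s
      = ENNReal.ofReal (1/(k+1:ℝ)) * volume (s ∩ A k) := by
    rw [Measure.smul_apply, smul_eq_mul, Measure.restrict_apply hs]
  rw [hres, ← hGd, withDensity_apply _ hs]
  calc ENNReal.ofReal (1/(k+1:ℝ)) * volume (s ∩ A k)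
      = ∫⁻ x in s ∩ A k, ENNReal.ofReal (1/(k+1:ℝ)) ∂volume := by
        rw [setLIntegral_const, mul_comm]
    _ ≤ ∫⁻ x in s ∩ A k, g x ∂volume := by
        refine lintegral_mono_ae ?_
        refine (ae_restrict_iff' (hs.inter (hAm k))).mpr ?_
        exact Filter.Eventually.of_forall fun x hx => hx.2.2
    _ ≤ ∫⁻ x in s, g x ∂volume := lintegral_mono_set Set.inter_subset_left

/-- If a probability distribution `F` on `[0,∞)` is spread out (some convolution power `F^{*n}`
dominates a nonzero absolutely continuous measure `G`), then some convolution power `F^{*n₀}`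
has a uniform component on an interval `(a, a+b)`:
`F^{*n₀}((u,v]) ≥ δ(v−u)` for all `a < u < v < a + b`. -/
theorem stmt15 (F : Measure ℝ) [IsProbabilityMeasure F] (hsupp : F (Set.Iio 0) = 0)
    (hspread : ∃ (n : ℕ) (G : Measure ℝ), 1 ≤ n ∧ G ≠ 0 ∧ G ≤ convPow F n ∧
      G ≪ (volume : Measure ℝ)) :
    ∃ (a b δ : ℝ) (n₀ : ℕ), 0 < a ∧ 0 < b ∧ 0 < δ ∧ 1 ≤ n₀ ∧
      ∀ u v : ℝ, a < u → u < v → v < a + b →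
        ENNReal.ofReal (δ * (v - u)) ≤ convPow F n₀ (Set.Ioc u v) := by
  obtain ⟨n, G, hn1, hG0, hGle, hGac⟩ := hspread
  haveI := convPow_prob F n
  haveI : IsFiniteMeasure G :=
    ⟨lt_of_le_of_lt (Measure.le_iff'.mp hGle Set.univ)
      (by rw [measure_univ]; exact ENNReal.one_lt_top)⟩
  have hGIic : G (Set.Iic 0) = 0 := by
    have h1 : G (Set.Iio 0) = 0 :=
      le_antisymm (le_trans (Measure.le_iff'.mp hGle _) (convPow_Iio F hsupp n).le) zero_le
    have h2 : G ({0} : Set ℝ) = 0 := hGac (by simp)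
    have he : Set.Iic (0:ℝ) = Set.Iio 0 ∪ {0} := by
      ext t; simp [le_iff_lt_or_eq]
    rw [he]
    exact measure_union_null h1 h2
  obtain ⟨ε, A, hε, hAm, hAsub, hApos, hle⟩ := exists_component G hG0 hGac hGIic
  haveI : (ae (volume.restrict A)).NeBot := by
    refine ae_neBot.mpr fun h => ?_
    rw [Measure.restrict_eq_zero] at h
    exact hApos.ne' h
  obtain ⟨x₀, hx₀tend, hx₀A⟩ :=
    ((Besicovitch.ae_tendsto_measure_inter_div volume A).and (ae_restrict_mem hAm)).exists
  have hx₀ε : ε < x₀ := hAsub x₀ hx₀A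
  have hev : ∀ᶠ ρ in nhdsWithin 0 (Set.Ioi 0),
      ENNReal.ofReal (3/4) <
        volume (A ∩ Metric.closedBall x₀ ρ) / volume (Metric.closedBall x₀ ρ) :=
    hx₀tend.eventually (eventually_gt_nhds (ENNReal.ofReal_lt_one.mpr (by norm_num)))
  obtain ⟨s₀, hs₀, hIoo⟩ := mem_nhdsGT_iff_exists_Ioo_subset.mp hev
  have hs₀0 : (0:ℝ) < s₀ := hs₀
  set r := min (s₀/2) ε with hrdef
  have hr0 : 0 < r := lt_min (by linarith) hε
  have hrε : r ≤ ε := min_le_right _ _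
  have hrs : r < s₀ := lt_of_le_of_lt (min_le_left _ _) (by linarith)
  have hb1 := hIoo ⟨hr0, hrs⟩
  have hb2 := hIoo (show r/2 ∈ Set.Ioo (0:ℝ) s₀ from ⟨by linarith, by linarith⟩)
  have hv1 : ENNReal.ofReal (3/4) * volume (Metric.closedBall x₀ r)
      ≤ volume (A ∩ Metric.closedBall x₀ r) := (ENNReal.mul_lt_of_lt_div hb1).le
  have hv2 : ENNReal.ofReal (3/4) * volume (Metric.closedBall x₀ (r/2))
      ≤ volume (A ∩ Metric.closedBall x₀ (r/2)) := (ENNReal.mul_lt_of_lt_div hb2).le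
  have hφ : ∀ t : ℝ, |t - 2*x₀| ≤ r/2 →
      ENNReal.ofReal (r/4) ≤ volume (A ∩ {x | t - x ∈ A}) := by
    intro t ht
    set I := Metric.closedBall x₀ r with hIdef
    set D := {x : ℝ | t - x ∈ A} with hDdef
    have hDm : MeasurableSet D := (measurable_const.sub measurable_id) hAm
    have hIm : MeasurableSet I := measurableSet_closedBall
    have hpre : (fun x : ℝ => t - x) ⁻¹' I = Metric.closedBall (t - x₀) r := by
      ext y
      simp only [hIdef, Set.mem_preimage, Metric.mem_closedBall, Real.dist_eq]
      rw [show t - y - x₀ = -(y - (t - x₀)) by ring, abs_neg]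
    have hball : Metric.closedBall x₀ (r/2) ⊆ Metric.closedBall (t - x₀) r := by
      refine Metric.closedBall_subset_closedBall' ?_
      rw [Real.dist_eq, show x₀ - (t - x₀) = -(t - 2*x₀) by ring, abs_neg]
      linarith
    have hDI : volume (A ∩ Metric.closedBall x₀ (r/2)) ≤ volume (D ∩ I) := by
      have hf : D ∩ I = (fun x : ℝ => t - x) ⁻¹' (A ∩ ((fun x : ℝ => t - x) ⁻¹' I)) := by
        ext x
        simp only [Set.mem_inter_iff, Set.mem_preimage, hDdef, Set.mem_setOf_eq, sub_sub_cancel]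
      have hmp := (Measure.measurePreserving_sub_left volume t).measure_preimage
        (s := A ∩ ((fun x : ℝ => t - x) ⁻¹' I))
        ((hAm.inter ((measurable_const.sub measurable_id) hIm)).nullMeasurableSet)
      rw [hf]
      calc volume (A ∩ Metric.closedBall x₀ (r/2))
          ≤ volume (A ∩ ((fun x : ℝ => t - x) ⁻¹' I)) := by
            rw [hpre]
            exact measure_mono (Set.inter_subset_inter_right _ hball)
        _ = volume ((fun x : ℝ => t - x) ⁻¹' (A ∩ ((fun x : ℝ => t - x) ⁻¹' I))) := by
            exact hmp.symm
    have hIE : volume (A ∩ I) + volume (D ∩ I) ≤ volume I + volume (A ∩ D) := by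
      have h := measure_union_add_inter (μ := volume) (A ∩ I) (hDm.inter hIm)
      calc volume (A ∩ I) + volume (D ∩ I)
          = volume ((A ∩ I) ∪ (D ∩ I)) + volume ((A ∩ I) ∩ (D ∩ I)) := h.symm
        _ ≤ volume I + volume (A ∩ D) := by
            refine add_le_add (measure_mono ?_) (measure_mono ?_)
            · exact Set.union_subset Set.inter_subset_right Set.inter_subset_right
            · intro x hx; exact ⟨hx.1.1, hx.2.1⟩
    have hvolI : volume I = ENNReal.ofReal (2*r) := Real.volume_closedBall x₀ r
    have hvolI2 : volume (Metric.closedBall x₀ (r/2)) = ENNReal.ofReal r := by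
      rw [Real.volume_closedBall]; congr 1; ring
    have t1 : ENNReal.ofReal (3/4*(2*r)) ≤ volume (A ∩ I) := by
      rw [ENNReal.ofReal_mul (by norm_num : (0:ℝ) ≤ 3/4), ← hvolI] at *
      exact hv1
    have t2 : ENNReal.ofReal (3/4*r) ≤ volume (D ∩ I) := by
      rw [ENNReal.ofReal_mul (by norm_num : (0:ℝ) ≤ 3/4), ← hvolI2]
      exact le_trans hv2 hDI
    have hnum : ENNReal.ofReal (2*r) + ENNReal.ofReal (r/4)
        ≤ volume (A ∩ I) + volume (D ∩ I) := by
      calc ENNReal.ofReal (2*r) + ENNReal.ofReal (r/4)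
          = ENNReal.ofReal (2*r + r/4) :=
            (ENNReal.ofReal_add (by positivity) (by positivity)).symm
        _ ≤ ENNReal.ofReal (3/4*(2*r) + 3/4*r) := ENNReal.ofReal_le_ofReal (by linarith)
        _ = ENNReal.ofReal (3/4*(2*r)) + ENNReal.ofReal (3/4*r) :=
            ENNReal.ofReal_add (by positivity) (by positivity)
        _ ≤ volume (A ∩ I) + volume (D ∩ I) := add_le_add t1 t2
    have hfinal := le_trans hnum hIE
    rw [hvolI] at hfinal
    exact (ENNReal.add_le_add_iff_left ENNReal.ofReal_ne_top).mp hfinal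
  refine ⟨2*x₀ - r/2, r, ε*(ε*(r/4)), n + n, by linarith, hr0, by positivity, by omega, ?_⟩
  intro u v hau huv hv
  have hsubset : ∀ t ∈ Set.Ioc u v, |t - 2*x₀| ≤ r/2 := by
    intro t ht
    rw [abs_sub_le_iff]
    exact ⟨by linarith [ht.2], by linarith [ht.1]⟩
  have hmono1 : (G.conv G) (Set.Ioc u v) ≤ ((convPow F n).conv (convPow F n)) (Set.Ioc u v) :=
    Measure.le_iff'.mp (myconv_mono hGle hGle) _
  have hmono2 := Measure.le_iff'.mp (myconv_mono hle hle) (Set.Ioc u v)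
  have hkey : ENNReal.ofReal (ε*(ε*(r/4)) * (v - u))
      ≤ ((ENNReal.ofReal ε • volume.restrict A).conv
          (ENNReal.ofReal ε • volume.restrict A)) (Set.Ioc u v) := by
    rw [smul_conv_smul _ _ measurableSet_Ioc, restrict_conv_apply A hAm measurableSet_Ioc]
    have hlb : ENNReal.ofReal (r/4) * volume (Set.Ioc u v)
        ≤ ∫⁻ t in Set.Ioc u v, volume (A ∩ {x | t - x ∈ A}) ∂volume := by
      rw [← setLIntegral_const]
      refine lintegral_mono_ae ((ae_restrict_iff' measurableSet_Ioc).mpr ?_)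
      exact Filter.Eventually.of_forall fun t ht => hφ t (hsubset t ht)
    calc ENNReal.ofReal (ε*(ε*(r/4)) * (v - u))
        = ENNReal.ofReal ε * (ENNReal.ofReal ε * (ENNReal.ofReal (r/4) * ENNReal.ofReal (v-u))) := by
          rw [show ε*(ε*(r/4))*(v-u) = ε*(ε*((r/4)*(v-u))) by ring,
            ENNReal.ofReal_mul hε.le, ENNReal.ofReal_mul hε.le,
            ENNReal.ofReal_mul (by positivity)]
      _ = ENNReal.ofReal ε * (ENNReal.ofReal ε *
            (ENNReal.ofReal (r/4) * volume (Set.Ioc u v))) := by rw [Real.volume_Ioc]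
      _ ≤ ENNReal.ofReal ε * (ENNReal.ofReal ε *
            ∫⁻ t in Set.Ioc u v, volume (A ∩ {x | t - x ∈ A}) ∂volume) := by
          exact mul_le_mul_right (mul_le_mul_right hlb _) _
  rw [convPow_add F n n]
  exact le_trans hkey (le_trans hmono2 hmono1)
end
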